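/- Let G = (V, E) be the graph on vertex set {s, t} ∪ V_1 ∪ … ∪ V_m formed by the parallel composition of m ≥ 2 internally disjoint s–t paths, where path i has n_i ≥ 1 internal vertices (set V_i). Then any linear arrangement π of G has cost at least Σ_{i=1}^m n_i + max_i n_i + 1. -/

import Mathlib

/-- The length of an edge under a linear arrangement `π : V ≃ Fin n`. -/
def elen {V : Type*} {n : ℕ} (π : V ≃ Fin n) : Sym2 V → ℕ :=
  Sym2.lift ⟨fun u v => (((π u : ℕ) : ℤ) - ((π v : ℕ) : ℤ)).natAbs,
    fun u v => by simp only []; omega⟩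

open Finset SimpleGraph

/-- The set of cuts crossed by an edge. -/
def cross {V : Type*} {n : ℕ} (π : V ≃ Fin n) : Sym2 V → Finset ℕ :=
  Sym2.lift ⟨fun u v => Finset.Ico (min (π u : ℕ) (π v : ℕ)) (max (π u : ℕ) (π v : ℕ)),
    fun u v => by simp [min_comm, max_comm]⟩

lemma elen_eq_card_cross {V : Type*} {n : ℕ} (π : V ≃ Fin n) (e : Sym2 V) :
    elen π e = (cross π e).card := by
  induction e using Sym2.ind with
  | _ u v =>
    simp only [elen, cross, Sym2.lift_mk, Nat.card_Ico]
    omega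

lemma cross_subset {V : Type*} {n : ℕ} (π : V ≃ Fin n) (e : Sym2 V) :
    cross π e ⊆ Finset.range (n - 1) := by
  induction e using Sym2.ind with
  | _ u v =>
    intro c hc
    simp only [cross, Sym2.lift_mk, Finset.mem_Ico] at hc
    have h1 := (π u).isLt
    have h2 := (π v).isLt
    simp only [Finset.mem_range]
    omega

lemma walk_cross {V : Type*} {G : SimpleGraph V} {x y : V} {n : ℕ} (π : V ≃ Fin n)
    (p : G.Walk x y) {c : ℕ} (hx : (π x : ℕ) ≤ c) (hy : c < (π y : ℕ)) :
    ∃ e ∈ p.edges, c ∈ cross π e := by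
  obtain ⟨d, hd, hd1, hd2⟩ := p.exists_boundary_dart {v | (π v : ℕ) ≤ c} hx (by simp; omega)
  refine ⟨d.edge, ?_, ?_⟩
  · rw [SimpleGraph.Walk.edges]
    exact List.mem_map_of_mem hd
  · simp only [Set.mem_setOf_eq, not_le] at hd1 hd2
    have : d.edge = s(d.fst, d.snd) := rfl
    rw [this]
    simp only [cross, Sym2.lift_mk, Finset.mem_Ico]
    omega

lemma walk_cross' {V : Type*} {G : SimpleGraph V} {x y : V} {n : ℕ} (π : V ≃ Fin n)
    (p : G.Walk x y) {c : ℕ}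
    (h : ((π x : ℕ) ≤ c ∧ c < (π y : ℕ)) ∨ ((π y : ℕ) ≤ c ∧ c < (π x : ℕ))) :
    ∃ e ∈ p.edges, c ∈ cross π e := by
  rcases h with ⟨h1, h2⟩ | ⟨h1, h2⟩
  · exact walk_cross π p h1 h2
  · obtain ⟨e, he, hc⟩ := walk_cross π p.reverse h1 h2
    rw [SimpleGraph.Walk.edges_reverse, List.mem_reverse] at he
    exact ⟨e, he, hc⟩

lemma edge_st_not_mem {V : Type*} {G : SimpleGraph V} {s t : V} (hst : s ≠ t)
    (p : G.Walk s t) (hp : p.IsPath) (hl : 2 ≤ p.length) : s(s, t) ∉ p.edges := by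
  intro hmem
  cases p with
  | nil => simp at hmem
  | cons h q =>
    rename_i v
    rw [SimpleGraph.Walk.edges_cons, List.mem_cons] at hmem
    rcases hmem with heq | hmem
    · have hv : v = t := by
        rw [Sym2.eq_iff] at heq
        rcases heq with ⟨_, h2⟩ | ⟨h1, h2⟩
        · exact h2.symm
        · exact absurd h2.symm hst
      subst hv
      have hq : q = SimpleGraph.Walk.nil := by
        rw [← SimpleGraph.Walk.isPath_iff_eq_nil]
        exact hp.of_cons
      subst hq
      simp at hl
    · have hs : s ∈ q.support := SimpleGraph.Walk.fst_mem_support_of_mem_edges q hmem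
      have := hp.support_nodup
      rw [SimpleGraph.Walk.support_cons, List.nodup_cons] at this
      exact this.1 hs

lemma edges_disjoint {V : Type*} {G : SimpleGraph V} {s t : V} (hst : s ≠ t) {m : ℕ}
    (P : Fin m → G.Walk s t) (hpath : ∀ i, (P i).IsPath) (hlen : ∀ i, 2 ≤ (P i).length)
    (hdisj : ∀ i j, i ≠ j → ∀ v, v ∈ (P i).support → v ∈ (P j).support → v = s ∨ v = t)
    {i j : Fin m} (hij : i ≠ j) {e : Sym2 V} (hi : e ∈ (P i).edges) (hj : e ∈ (P j).edges) :
    False := by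
  induction e using Sym2.ind with
  | _ u v =>
    have huv : u ≠ v := (SimpleGraph.Walk.adj_of_mem_edges _ hi).ne
    have hui := SimpleGraph.Walk.fst_mem_support_of_mem_edges _ hi
    have hvi := SimpleGraph.Walk.snd_mem_support_of_mem_edges _ hi
    have huj := SimpleGraph.Walk.fst_mem_support_of_mem_edges _ hj
    have hvj := SimpleGraph.Walk.snd_mem_support_of_mem_edges _ hj
    have hu := hdisj i j hij u hui huj
    have hv := hdisj i j hij v hvi hvj
    have hest : s(u, v) = s(s, t) := by
      rcases hu with rfl | rfl <;> rcases hv with rfl | rfl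
      · exact absurd rfl huv
      · rfl
      · exact Sym2.eq_swap
      · exact absurd rfl huv
    rw [hest] at hi
    exact edge_st_not_mem hst (P i) (hpath i) (hlen i) hi

lemma two_le_cut {V : Type*} [Fintype V] [DecidableEq V] (G : SimpleGraph V)
    [DecidableRel G.Adj] (s t : V) (hst : s ≠ t) (m : ℕ) (hm : 2 ≤ m)
    (P : Fin m → G.Walk s t) (hpath : ∀ i, (P i).IsPath) (hlen : ∀ i, 2 ≤ (P i).length)
    (hdisj : ∀ i j, i ≠ j → ∀ v, v ∈ (P i).support → v ∈ (P j).support → v = s ∨ v = t)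
    (hcover : ∀ v : V, ∃ i, v ∈ (P i).support)
    (π : V ≃ Fin (Fintype.card V)) (c : ℕ) (hc : c + 1 < Fintype.card V) :
    2 ≤ (G.edgeFinset.filter (fun e => c ∈ cross π e)).card := by
  rw [show (2 : ℕ) = 1 + 1 from rfl, Nat.add_one_le_iff, Finset.one_lt_card]
  have hmemF : ∀ {i : Fin m} {e : Sym2 V}, e ∈ (P i).edges →
      e ∈ G.edgeFinset := fun {i e} he =>
    SimpleGraph.mem_edgeFinset.mpr ((P i).edges_subset_edgeSet he)
  by_cases hs : (π s : ℕ) ≤ c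
  · by_cases ht : (π t : ℕ) ≤ c
    · -- s, t both on the left; find a vertex on the right
      set w := π.symm ⟨c + 1, hc⟩ with hw
      have hπw : (π w : ℕ) = c + 1 := by simp [hw]
      obtain ⟨i, hwi⟩ := hcover w
      obtain ⟨e₁, he₁, hc₁⟩ := walk_cross π ((P i).takeUntil w hwi) hs (by omega)
      obtain ⟨e₂, he₂, hc₂⟩ := walk_cross' π ((P i).dropUntil w hwi)
        (Or.inr ⟨ht, by omega⟩)
      have hspec := (P i).take_spec hwi
      have hnd : ((P i).edges).Nodup := (hpath i).isTrail.edges_nodup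
      rw [← hspec, SimpleGraph.Walk.edges_append, List.nodup_append] at hnd
      have he₁' : e₁ ∈ (P i).edges := by
        rw [← hspec, SimpleGraph.Walk.edges_append]
        exact List.mem_append_left _ he₁
      have he₂' : e₂ ∈ (P i).edges := by
        rw [← hspec, SimpleGraph.Walk.edges_append]
        exact List.mem_append_right _ he₂
      exact ⟨e₁, Finset.mem_filter.mpr ⟨hmemF he₁', hc₁⟩,
        e₂, Finset.mem_filter.mpr ⟨hmemF he₂', hc₂⟩,
        fun hEq => hnd.2.2 e₁ he₁ e₂ he₂ hEq⟩
    · -- cut separates s and t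
      push_neg at ht
      obtain ⟨e₁, he₁, hc₁⟩ := walk_cross π (P ⟨0, by omega⟩) hs ht
      obtain ⟨e₂, he₂, hc₂⟩ := walk_cross π (P ⟨1, by omega⟩) hs ht
      refine ⟨e₁, Finset.mem_filter.mpr ⟨hmemF he₁, hc₁⟩,
        e₂, Finset.mem_filter.mpr ⟨hmemF he₂, hc₂⟩, fun hEq => ?_⟩
      exact edges_disjoint hst P hpath hlen hdisj
        (show (⟨0, by omega⟩ : Fin m) ≠ ⟨1, by omega⟩ by simp) he₁ (hEq ▸ he₂)
  · push_neg at hs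
    by_cases ht : (π t : ℕ) ≤ c
    · -- cut separates t and s
      obtain ⟨e₁, he₁, hc₁⟩ := walk_cross' π (P ⟨0, by omega⟩) (Or.inr ⟨ht, hs⟩)
      obtain ⟨e₂, he₂, hc₂⟩ := walk_cross' π (P ⟨1, by omega⟩) (Or.inr ⟨ht, hs⟩)
      refine ⟨e₁, Finset.mem_filter.mpr ⟨hmemF he₁, hc₁⟩,
        e₂, Finset.mem_filter.mpr ⟨hmemF he₂, hc₂⟩, fun hEq => ?_⟩
      exact edges_disjoint hst P hpath hlen hdisj
        (show (⟨0, by omega⟩ : Fin m) ≠ ⟨1, by omega⟩ by simp) he₁ (hEq ▸ he₂)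
    · -- s, t both on the right; find a vertex on the left
      push_neg at ht
      set w := π.symm ⟨c, by omega⟩ with hw
      have hπw : (π w : ℕ) = c := by simp [hw]
      obtain ⟨i, hwi⟩ := hcover w
      obtain ⟨e₁, he₁, hc₁⟩ := walk_cross' π ((P i).takeUntil w hwi)
        (Or.inr ⟨by omega, hs⟩)
      obtain ⟨e₂, he₂, hc₂⟩ := walk_cross π ((P i).dropUntil w hwi) (by omega) ht
      have hspec := (P i).take_spec hwi
      have hnd : ((P i).edges).Nodup := (hpath i).isTrail.edges_nodup
      rw [← hspec, SimpleGraph.Walk.edges_append, List.nodup_append] at hnd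
      have he₁' : e₁ ∈ (P i).edges := by
        rw [← hspec, SimpleGraph.Walk.edges_append]
        exact List.mem_append_left _ he₁
      have he₂' : e₂ ∈ (P i).edges := by
        rw [← hspec, SimpleGraph.Walk.edges_append]
        exact List.mem_append_right _ he₂
      exact ⟨e₁, Finset.mem_filter.mpr ⟨hmemF he₁', hc₁⟩,
        e₂, Finset.mem_filter.mpr ⟨hmemF he₂', hc₂⟩,
        fun hEq => hnd.2.2 e₁ he₁ e₂ he₂ hEq⟩

/-- let `G` be the parallel composition of `m ≥ 2` internally disjoint
`s`–`t` paths `P i`, where path `i` has `n_i = (P i).length - 1 ≥ 1` internal vertices.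
Then any linear arrangement `π` of `G` has cost at least `Σ n_i + max_i n_i + 1`. -/
theorem stmt9 {V : Type*} [Fintype V] [DecidableEq V] (G : SimpleGraph V)
    [DecidableRel G.Adj] (s t : V) (hst : s ≠ t) (m : ℕ) (hm : 2 ≤ m)
    (P : Fin m → G.Walk s t)
    (hpath : ∀ i, (P i).IsPath)
    (hlen : ∀ i, 2 ≤ (P i).length)
    (hdisj : ∀ i j, i ≠ j → ∀ v, v ∈ (P i).support → v ∈ (P j).support →
      v = s ∨ v = t)
    (hcover : ∀ v : V, ∃ i, v ∈ (P i).support)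
    (hedges : ∀ e ∈ G.edgeSet, ∃ i, e ∈ (P i).edges)
    (π : V ≃ Fin (Fintype.card V)) :
    (∑ i, ((P i).length - 1)) + (Finset.univ.sup fun i => (P i).length - 1) + 1
      ≤ ∑ e ∈ G.edgeFinset, elen π e := by
  classical
  -- cardinality bound
  have hN2 : 2 ≤ Fintype.card V := Fintype.one_lt_card_iff_nontrivial.mpr ⟨s, t, hst⟩
  have hScard : ∀ i : Fin m, (((P i).support.toFinset) \ {s, t}).card = (P i).length - 1 := by
    intro i
    have hnd := (hpath i).support_nodup
    have hsub : ({s, t} : Finset V) ⊆ (P i).support.toFinset := by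
      intro x hx
      simp only [Finset.mem_insert, Finset.mem_singleton] at hx
      rcases hx with rfl | rfl
      · exact List.mem_toFinset.mpr ((P i).start_mem_support)
      · exact List.mem_toFinset.mpr ((P i).end_mem_support)
    rw [Finset.card_sdiff_of_subset hsub, List.toFinset_card_of_nodup hnd,
      SimpleGraph.Walk.length_support,
      Finset.card_insert_of_notMem (by simp [hst]), Finset.card_singleton]
    omega
  have hcard : (∑ i, ((P i).length - 1)) + 2 ≤ Fintype.card V := by
    have hdisjS : ∀ i ∈ (Finset.univ : Finset (Fin m)), ∀ j ∈ Finset.univ, i ≠ j →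
        Disjoint (((P i).support.toFinset) \ {s, t}) (((P j).support.toFinset) \ {s, t}) := by
      intro i _ j _ hij
      rw [Finset.disjoint_left]
      intro v hvi hvj
      simp only [Finset.mem_sdiff, List.mem_toFinset, Finset.mem_insert,
        Finset.mem_singleton, not_or] at hvi hvj
      rcases hdisj i j hij v hvi.1 hvj.1 with h | h
      · exact hvi.2.1 h
      · exact hvi.2.2 h
    have h1 : ∑ i, ((P i).length - 1)
        = (Finset.univ.biUnion fun i : Fin m => ((P i).support.toFinset) \ {s, t}).card := by
      rw [Finset.card_biUnion hdisjS]
      exact Finset.sum_congr rfl fun i _ => (hScard i).symm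
    have h2 : (Finset.univ.biUnion fun i : Fin m => ((P i).support.toFinset) \ {s, t})
        ⊆ Finset.univ \ {s, t} := by
      intro v hv
      simp only [Finset.mem_biUnion, Finset.mem_sdiff] at hv ⊢
      obtain ⟨i, _, _, hv2⟩ := hv
      exact ⟨Finset.mem_univ v, hv2⟩
    have h3 := Finset.card_le_card h2
    rw [Finset.card_sdiff_of_subset (Finset.subset_univ _)] at h3
    have h4 : ({s, t} : Finset V).card = 2 := by
      rw [Finset.card_insert_of_notMem (by simp [hst]), Finset.card_singleton]
    rw [h4, Finset.card_univ] at h3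
    omega
  have hsup : (Finset.univ.sup fun i => (P i).length - 1) ≤ ∑ i, ((P i).length - 1) :=
    Finset.sup_le fun i _ => Finset.single_le_sum (f := fun i => (P i).length - 1)
      (fun _ _ => Nat.zero_le _) (Finset.mem_univ i)
  -- main bound via cuts
  have hmain : 2 * (Fintype.card V - 1) ≤ ∑ e ∈ G.edgeFinset, elen π e := by
    calc 2 * (Fintype.card V - 1) = ∑ _c ∈ Finset.range (Fintype.card V - 1), 2 := by
          rw [Finset.sum_const, Finset.card_range, smul_eq_mul, mul_comm]
      _ ≤ ∑ c ∈ Finset.range (Fintype.card V - 1),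
            (G.edgeFinset.filter (fun e => c ∈ cross π e)).card := by
          refine Finset.sum_le_sum fun c hc => ?_
          rw [Finset.mem_range] at hc
          exact two_le_cut G s t hst m hm P hpath hlen hdisj hcover π c (by omega)
      _ = ∑ c ∈ Finset.range (Fintype.card V - 1), ∑ e ∈ G.edgeFinset,
            (if c ∈ cross π e then 1 else 0) := by
          refine Finset.sum_congr rfl fun c _ => ?_
          rw [Finset.card_filter]
      _ = ∑ e ∈ G.edgeFinset, ∑ c ∈ Finset.range (Fintype.card V - 1),
            (if c ∈ cross π e then 1 else 0) := Finset.sum_comm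
      _ = ∑ e ∈ G.edgeFinset, (cross π e).card := by
          refine Finset.sum_congr rfl fun e _ => ?_
          rw [← Finset.card_filter]
          congr 1
          rw [Finset.filter_mem_eq_inter]
          exact Finset.inter_eq_right.mpr (cross_subset π e)
      _ = ∑ e ∈ G.edgeFinset, elen π e := by
          exact Finset.sum_congr rfl fun e _ => (elen_eq_card_cross π e).symm
  omega
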